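/- arXiv:1401.7523 — 3 statements merged into one kernel-verified Lean document; each statement's English description precedes it below -/
import Mathlib

section
/- Let Θ = (θ_{ij}) be a 3×3 real symmetric positive definite matrix with inverse (θ^{ij}). Then θ_{12}θ^{12} + θ_{13}θ^{13} ≤ 0, with equality if and only if θ_{12} = θ_{13} = 0. -/
/-- For a 3×3 real symmetric positive definite matrix `Θ`,
`θ₁₂ θ^{12} + θ₁₃ θ^{13} ≤ 0`, with equality iff `θ₁₂ = θ₁₃ = 0`. -/
theorem offdiag_inv_pairing_nonpos (Θ : Matrix (Fin 3) (Fin 3) ℝ)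
    (hsymm : Θ.IsSymm) (hpd : Θ.PosDef) :
    Θ 0 1 * Θ⁻¹ 0 1 + Θ 0 2 * Θ⁻¹ 0 2 ≤ 0 ∧
      (Θ 0 1 * Θ⁻¹ 0 1 + Θ 0 2 * Θ⁻¹ 0 2 = 0 ↔ Θ 0 1 = 0 ∧ Θ 0 2 = 0) := by
  have hD : 0 < Θ.det := hpd.det_pos
  have hs10 : Θ 1 0 = Θ 0 1 := hsymm.apply 0 1
  have hs20 : Θ 2 0 = Θ 0 2 := hsymm.apply 0 2
  have hs21 : Θ 2 1 = Θ 1 2 := hsymm.apply 1 2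
  set b := Θ 0 1 with hb
  set c := Θ 0 2 with hc
  set Q : ℝ := Θ 1 1 * c ^ 2 - 2 * b * c * (Θ 1 2) + Θ 2 2 * b ^ 2 with hQ
  -- Q is the value of the quadratic form at v = ![0, c, -b]
  have hform : ∀ v : Fin 3 → ℝ, v ≠ 0 → 0 < dotProduct v (Θ.mulVec v) := by
    intro v hv
    have := hpd.dotProduct_mulVec_pos hv
    simpa using this
  have hQform : Q = dotProduct ![0, c, -b] (Θ.mulVec ![0, c, -b]) := by
    simp [Matrix.mulVec, dotProduct, Fin.sum_univ_three, hQ, hs21]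
    ring
  have hQnonneg : 0 ≤ Q := by
    by_cases h : b = 0 ∧ c = 0
    · simp [hQ, h.1, h.2]
    · have hv : (![0, c, -b] : Fin 3 → ℝ) ≠ 0 := by
        intro h0
        apply h
        constructor
        · have := congrFun h0 2
          simpa using neg_eq_zero.mp (by simpa using this)
        · have := congrFun h0 1
          simpa using this
      have := hform _ hv
      linarith [hQform ▸ this]
  have hQzero : Q = 0 ↔ b = 0 ∧ c = 0 := by
    constructor
    · intro h0
      by_contra h
      have hv : (![0, c, -b] : Fin 3 → ℝ) ≠ 0 := by
        intro hcon
        apply h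
        constructor
        · have := congrFun hcon 2
          simpa using neg_eq_zero.mp (by simpa using this)
        · have := congrFun hcon 1
          simpa using this
      have := hform _ hv
      rw [← hQform, h0] at this
      exact lt_irrefl 0 this
    · rintro ⟨h1, h2⟩; simp [hQ, h1, h2]
  -- inverse entries
  have hinv : Θ⁻¹ = Θ.det⁻¹ • Θ.adjugate := by
    rw [Matrix.inv_def, Ring.inverse_eq_inv]
  have h01 : Θ⁻¹ 0 1 = Θ.det⁻¹ * (-(b * Θ 2 2) + c * Θ 1 2) := by
    rw [hinv]
    simp [Matrix.adjugate_fin_three, hs10, hs20, hs21]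
    exact Or.inl rfl
  have h02 : Θ⁻¹ 0 2 = Θ.det⁻¹ * (b * Θ 1 2 - c * Θ 1 1) := by
    rw [hinv]
    simp [Matrix.adjugate_fin_three, hs10, hs20, hs21]
    exact Or.inl rfl
  have key : b * Θ⁻¹ 0 1 + c * Θ⁻¹ 0 2 = -Q / Θ.det := by
    rw [h01, h02]
    field_simp
    ring
  refine ⟨?_, ?_⟩
  · rw [key]
    apply div_nonpos_of_nonpos_of_nonneg <;> linarith
  · rw [key]
    rw [div_eq_zero_iff]
    constructor
    · rintro (h | h)
      · exact hQzero.mp (by linarith)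
      · exact absurd h (ne_of_gt hD)
    · intro h
      exact Or.inl (by have := hQzero.mpr h; linarith)
end

section
/- Let Θ be a 3×3 real symmetric positive definite matrix with entries θ_{ij} and let s ∈ ℝ³. Then s₁²/θ_{11} = sᵀ Θ⁻¹ s if and only if there exists a constant k ∈ ℝ such that s₁ = k θ_{11}, s₂ = k θ_{12}, s₃ = k θ_{13} (i.e., s = k times the first column of Θ). -/
open Matrix

/-- Equality `s₁²/θ₁₁ = sᵀ Θ⁻¹ s` holds iff `s` is a multiple of the first
column of `Θ`. -/
theorem sq_div_theta11_eq_iff (Θ : Matrix (Fin 3) (Fin 3) ℝ)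
    (hsymm : Θ.IsSymm) (hpd : Θ.PosDef) (s : Fin 3 → ℝ) :
    (s 0) ^ 2 / Θ 0 0 = s ⬝ᵥ (Θ⁻¹ *ᵥ s) ↔ ∃ k : ℝ, ∀ i, s i = k * Θ i 0 := by
  have hunit : IsUnit Θ.det := isUnit_iff_ne_zero.mpr (ne_of_gt hpd.det_pos)
  have hd : 0 < Θ 0 0 := by
    have := hpd.dotProduct_mulVec_pos (x := Pi.single 0 1) (by
      intro h
      have := congrFun h 0
      simp at this)
    simpa [single_dotProduct, Matrix.mulVec_single] using this
  have hdne : Θ 0 0 ≠ 0 := ne_of_gt hd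
  set t := Θ⁻¹ *ᵥ s with ht
  have hΘt : Θ *ᵥ t = s := by
    rw [ht, Matrix.mulVec_mulVec, Matrix.mul_nonsing_inv _ hunit, Matrix.one_mulVec]
  set c := s 0 / Θ 0 0 with hc
  set e : Fin 3 → ℝ := Pi.single 0 1 with he
  set u : Fin 3 → ℝ := t - c • e with hu
  have he1 : e ⬝ᵥ (Θ *ᵥ t) = s 0 := by
    rw [hΘt, he, single_dotProduct, one_mul]
  have he2 : t ⬝ᵥ (Θ *ᵥ e) = s 0 := by
    rw [Matrix.dotProduct_mulVec, ← Matrix.mulVec_transpose, hsymm.eq, hΘt, he,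
      dotProduct_single, mul_one]
  have he3 : e ⬝ᵥ (Θ *ᵥ e) = Θ 0 0 := by
    simp [he, single_dotProduct, Matrix.mulVec_single]
  have key : u ⬝ᵥ (Θ *ᵥ u) = s ⬝ᵥ t - s 0 ^ 2 / Θ 0 0 := by
    have hts : t ⬝ᵥ (Θ *ᵥ t) = s ⬝ᵥ t := by
      rw [Matrix.dotProduct_mulVec, ← Matrix.mulVec_transpose, hsymm.eq, hΘt,
        dotProduct_comm]
    rw [hu]
    rw [Matrix.mulVec_sub, Matrix.mulVec_smul, sub_dotProduct,
      dotProduct_sub, dotProduct_sub, smul_dotProduct,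
      dotProduct_smul, dotProduct_smul]
    rw [smul_dotProduct, hts, he1, he2, he3]
    simp only [smul_eq_mul, hc]
    field_simp
    ring
  constructor
  · intro h
    have hu0 : u = 0 := by
      by_contra hne
      have := hpd.dotProduct_mulVec_pos hne
      rw [show star u = u from rfl, key, ← h] at this
      simp at this
    refine ⟨c, fun i => ?_⟩
    have htc : t = c • e := by
      have := sub_eq_zero.mp hu0
      exact this
    have : s = Θ *ᵥ (c • e) := by rw [← htc, hΘt]
    have := congrFun this i
    simpa [Matrix.mulVec_smul, he, Matrix.mulVec_single, mul_comm] using this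
  · rintro ⟨k, hk⟩
    have hs : s = Θ *ᵥ (k • e) := by
      funext i
      simp [Matrix.mulVec_smul, he, Matrix.mulVec_single, hk i, mul_comm]
    have htk : t = k • e := by
      rw [ht, hs, Matrix.mulVec_mulVec, Matrix.nonsing_inv_mul _ hunit, Matrix.one_mulVec]
    have hs0 : s 0 = k * Θ 0 0 := hk 0
    rw [htk, dotProduct_smul, he, dotProduct_single, mul_one, hs0]
    field_simp
    ring
end

section
/- For 0 < η₂ < (425 + 125√3073)/288, the linear polynomial p̃₁(z) = 25(5z − 7) + 8η₂ and the cubic p̃₂(z) = 25(5z − 7)(5z² − 26z + 15) + 8η₂(23z² − 73z + 3) have no common root; indeed p̃₂((175 − 8η₂)/125) = 8η₂(1152η₂² − 3400η₂ − 664375)/15625 < 0. -/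
/-- For `0 < η₂ < (425 + 125√3073)/288`, the linear polynomial
`p̃₁(z) = 25(5z − 7) + 8η₂` and the cubic
`p̃₂(z) = 25(5z − 7)(5z² − 26z + 15) + 8η₂(23z² − 73z + 3)` have no common
root; indeed `p̃₂((175 − 8η₂)/125) = 8η₂(1152η₂² − 3400η₂ − 664375)/15625 < 0`. -/
theorem linear_cubic_no_common_root (η₂ : ℝ) (h0 : 0 < η₂)
    (h1 : η₂ < (425 + 125 * Real.sqrt 3073) / 288) :
    (∀ z : ℝ, 25 * (5 * z - 7) + 8 * η₂ = 0 →
      25 * (5 * z - 7) * (5 * z ^ 2 - 26 * z + 15) +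
        8 * η₂ * (23 * z ^ 2 - 73 * z + 3) ≠ 0) ∧
    (let z₀ := (175 - 8 * η₂) / 125
     25 * (5 * z₀ - 7) * (5 * z₀ ^ 2 - 26 * z₀ + 15) +
        8 * η₂ * (23 * z₀ ^ 2 - 73 * z₀ + 3) =
      8 * η₂ * (1152 * η₂ ^ 2 - 3400 * η₂ - 664375) / 15625 ∧
     8 * η₂ * (1152 * η₂ ^ 2 - 3400 * η₂ - 664375) / 15625 < 0) := by
  have hs : Real.sqrt 3073 ^ 2 = 3073 := Real.sq_sqrt (by norm_num)
  have hs0 : (0:ℝ) ≤ Real.sqrt 3073 := Real.sqrt_nonneg _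
  have hquad : 1152 * η₂ ^ 2 - 3400 * η₂ - 664375 < 0 := by
    nlinarith [sq_nonneg (Real.sqrt 3073 - (288 * η₂ - 425) / 125),
      mul_pos h0 (sub_pos.mpr h1)]
  have hneg : 8 * η₂ * (1152 * η₂ ^ 2 - 3400 * η₂ - 664375) / 15625 < 0 := by
    apply div_neg_of_neg_of_pos _ (by norm_num)
    exact mul_neg_of_pos_of_neg (by linarith) hquad
  refine ⟨fun z hz => ?_, ?_, hneg⟩
  · have hz' : z = (175 - 8 * η₂) / 125 := by linarith
    subst hz'
    intro h
    rw [show (25 * (5 * ((175 - 8 * η₂) / 125) - 7) *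
        (5 * ((175 - 8 * η₂) / 125) ^ 2 - 26 * ((175 - 8 * η₂) / 125) + 15) +
        8 * η₂ * (23 * ((175 - 8 * η₂) / 125) ^ 2 - 73 * ((175 - 8 * η₂) / 125) + 3)) =
        8 * η₂ * (1152 * η₂ ^ 2 - 3400 * η₂ - 664375) / 15625 by ring] at h
    linarith
  · ring
end
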